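/- Let x and v be positive definite n × n complex matrices with Tr x = Tr v = 1 and d_H(x, v) ≤ η for some real η ≥ 0. Then e^{−η}·v ≤ x ≤ e^{η}·v in the Loewner order, and consequently ‖x − v‖₁ ≤ e^{η} − 1. -/

import Mathlib

open Matrix Filter
open scoped ComplexOrder

noncomputable section

/-- The trace norm `‖A‖₁ = Tr √(AᴴA)` of a complex square matrix. -/
def traceNorm {m : Type*} [Fintype m] [DecidableEq m] (A : Matrix m m ℂ) : ℝ :=
  ((Matrix.posSemidef_conjTranspose_mul_self A).1.eigenvectorUnitary.1 *
    Matrix.diagonal (((↑) : ℝ → ℂ) ∘ (Real.sqrt ∘ (Matrix.posSemidef_conjTranspose_mul_self A).1.eigenvalues)) *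
    (star (Matrix.posSemidef_conjTranspose_mul_self A).1.eigenvectorUnitary : Matrix m m ℂ)).trace.re

/-- Spectral radius of a map on a complex vector space:
the supremum of the moduli of its eigenvalues. -/
def specRad {M : Type*} [Zero M] [SMul ℂ M] (T : M → M) : ℝ :=
  sSup {r : ℝ | ∃ (c : ℂ) (v : M), v ≠ 0 ∧ T v = c • v ∧ r = ‖c‖}

/-- A linear map on square matrices is positive if it maps positive semidefinite
matrices to positive semidefinite matrices. -/
def IsPosMap {m : Type*} [Fintype m] (T : Matrix m m ℂ →ₗ[ℂ] Matrix m m ℂ) : Prop :=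
  ∀ A : Matrix m m ℂ, A.PosSemidef → (T A).PosSemidef

/-- `sup(x/y) = inf {λ ≥ 0 : x ≤ λ y}` (in `[0,∞]`, with the Loewner order). -/
def supRatio {m : Type*} [Fintype m] (x y : Matrix m m ℂ) : ENNReal :=
  sInf {r : ENNReal | ∃ c : ℝ, 0 ≤ c ∧ r = ENNReal.ofReal c ∧ (c • y - x).PosSemidef}

/-- `inf(x/y) = sup {λ ≥ 0 : λ y ≤ x}` (in `[0,∞]`, with the Loewner order). -/
def infRatio {m : Type*} [Fintype m] (x y : Matrix m m ℂ) : ENNReal :=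
  sSup {r : ENNReal | ∃ c : ℝ, 0 ≤ c ∧ r = ENNReal.ofReal c ∧ (x - c • y).PosSemidef}

/-- The Hilbert projective metric `d_H(x,y) = log (sup(x/y) / inf(x/y)) ∈ [0,∞]`. -/
def dH {m : Type*} [Fintype m] (x y : Matrix m m ℂ) : EReal :=
  ENNReal.log (supRatio x y / infRatio x y)

/-- The projective diameter `Δ(T) = sup { d_H(T x, T y) : x, y PSD nonzero }`. -/
def DeltaT {m : Type*} [Fintype m] (T : Matrix m m ℂ →ₗ[ℂ] Matrix m m ℂ) : EReal :=
  sSup {e : EReal | ∃ x y : Matrix m m ℂ,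
    x.PosSemidef ∧ x ≠ 0 ∧ y.PosSemidef ∧ y ≠ 0 ∧ e = dH (T x) (T y)}

end

section Helpers

lemma real_smul_eq {N : Type*} [Fintype N] (c : ℝ) (M : Matrix N N ℂ) :
    c • M = (c : ℂ) • M := by
  ext i j; simp [Complex.real_smul]

lemma herm_real_smul {N : Type*} [Fintype N] {M : Matrix N N ℂ} (h : M.IsHermitian) (c : ℝ) :
    (c • M).IsHermitian := by
  rw [real_smul_eq]
  unfold Matrix.IsHermitian
  rw [conjTranspose_smul, h.eq]
  simp

lemma psd_real_smul {N : Type*} [Fintype N] {M : Matrix N N ℂ} (h : M.PosSemidef) {c : ℝ}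
    (hc : 0 ≤ c) : (c • M).PosSemidef := by
  refine .of_dotProduct_mulVec_nonneg (herm_real_smul h.1 c) fun y => ?_
  rw [real_smul_eq, smul_mulVec, dotProduct_smul]
  exact smul_nonneg (by exact_mod_cast hc) (h.dotProduct_mulVec_nonneg y)

lemma psd_diag_nonneg {N : Type*} [Fintype N] [DecidableEq N] {M : Matrix N N ℂ}
    (h : M.PosSemidef) (i : N) : 0 ≤ M i i := by
  exact h.diag_nonneg

lemma psd_trace_nonneg {N : Type*} [Fintype N] [DecidableEq N] {M : Matrix N N ℂ}
    (h : M.PosSemidef) : 0 ≤ M.trace :=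
  Finset.sum_nonneg fun i _ => psd_diag_nonneg h i

lemma psd_affine {N : Type*} [Fintype N] [DecidableEq N] {A : Matrix N N ℂ}
    (hA : A.IsHermitian) (α β : ℝ) (h : ∀ i, 0 ≤ α + β * hA.eigenvalues i) :
    (α • (1 : Matrix N N ℂ) + β • A).PosSemidef := by
  have hU : (hA.eigenvectorUnitary : Matrix N N ℂ) * star (hA.eigenvectorUnitary : Matrix N N ℂ)
      = 1 := Matrix.mem_unitaryGroup_iff.mp hA.eigenvectorUnitary.2
  have key : α • (1 : Matrix N N ℂ) + β • A
      = (hA.eigenvectorUnitary : Matrix N N ℂ)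
        * diagonal (fun i => ((α + β * hA.eigenvalues i : ℝ) : ℂ))
        * star (hA.eigenvectorUnitary : Matrix N N ℂ) := by
    have hdiag : diagonal (fun i => ((α + β * hA.eigenvalues i : ℝ) : ℂ))
        = α • (1 : Matrix N N ℂ) + β • diagonal (RCLike.ofReal ∘ hA.eigenvalues) := by
      ext i j
      by_cases hij : i = j
      · subst hij
        simp [diagonal_apply_eq, Matrix.one_apply, Complex.real_smul]
      · simp [diagonal_apply_ne _ hij, Matrix.one_apply_ne hij]
    rw [hdiag, Matrix.mul_add, Matrix.add_mul, Matrix.mul_smul, Matrix.smul_mul,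
      Matrix.mul_smul, Matrix.smul_mul, Matrix.mul_one, hU]
    conv_lhs => rw [hA.spectral_theorem, Unitary.conjStarAlgAut_apply]
  rw [key, Matrix.star_eq_conjTranspose]
  refine Matrix.PosSemidef.mul_mul_conjTranspose_same ?_ _
  refine posSemidef_diagonal_iff.mpr fun i => ?_
  exact_mod_cast Complex.zero_le_real.mpr (h i)

lemma eps_nonneg {z p : ℂ} {ε₀ : ℝ} (hε₀ : 0 < ε₀) (hp : 0 ≤ p)
    (h : ∀ ε : ℝ, 0 < ε → ε < ε₀ → 0 ≤ z + (ε : ℂ) * p) : 0 ≤ z := by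
  have hpre : 0 ≤ p.re := (Complex.le_def.mp hp).1
  have hpim : p.im = 0 := ((Complex.le_def.mp hp).2).symm
  rw [Complex.le_def]
  have h1 := h (ε₀ / 2) (by linarith) (by linarith)
  have him : z.im = 0 := by
    have := (Complex.le_def.mp h1).2
    simp [hpim] at this
    linarith [this]
  refine ⟨?_, by simp [him]⟩
  simp only [Complex.zero_re]
  by_contra hlt
  push_neg at hlt
  set ε : ℝ := min (ε₀ / 2) ((-z.re) / (p.re + 1)) with hε
  have hεpos : 0 < ε := lt_min (by linarith) (div_pos (by linarith) (by linarith))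
  have hεlt : ε < ε₀ := lt_of_le_of_lt (min_le_left _ _) (by linarith)
  have h2 := (Complex.le_def.mp (h ε hεpos hεlt)).1
  simp only [Complex.zero_re, Complex.add_re, Complex.mul_re, Complex.ofReal_re,
    Complex.ofReal_im, hpim] at h2
  have hεle : ε ≤ (-z.re) / (p.re + 1) := min_le_right _ _
  have : ε * p.re ≤ ((-z.re) / (p.re + 1)) * p.re := by
    apply mul_le_mul_of_nonneg_right hεle hpre
  have hkey : ((-z.re) / (p.re + 1)) * p.re < -z.re := by
    rw [div_mul_eq_mul_div, div_lt_iff₀ (by linarith)]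
    nlinarith
  nlinarith

lemma psd_of_forall_gt {N : Type*} [Fintype N] {x v : Matrix N N ℂ} (hv : v.PosSemidef) (c₀ : ℝ)
    (h : ∀ c : ℝ, c₀ < c → (c • v - x).PosSemidef) : (c₀ • v - x).PosSemidef := by
  have h1 := h (c₀ + 1) (by linarith)
  have hxh : x.IsHermitian := by
    have h2 : ((c₀ + 1) • v - x).IsHermitian := h1.1
    have hx : x = (c₀ + 1) • v - ((c₀ + 1) • v - x) := by abel
    rw [hx]; exact (herm_real_smul hv.1 _).sub h2
  refine .of_dotProduct_mulVec_nonneg ((herm_real_smul hv.1 c₀).sub hxh) fun y => ?_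
  apply eps_nonneg (ε₀ := 1) one_pos (hv.dotProduct_mulVec_nonneg y)
  intro ε hε hε1
  have h3 := (h (c₀ + ε) (by linarith)).dotProduct_mulVec_nonneg y
  convert h3 using 1
  simp only [sub_mulVec, dotProduct_sub, real_smul_eq, smul_mulVec, dotProduct_smul,
    smul_eq_mul, Complex.ofReal_add]
  ring

lemma psd_of_forall_lt {N : Type*} [Fintype N] {x v : Matrix N N ℂ} (hv : v.PosSemidef) (c₀ : ℝ)
    (hc₀ : 0 < c₀)
    (h : ∀ c : ℝ, 0 ≤ c → c < c₀ → (x - c • v).PosSemidef) : (x - c₀ • v).PosSemidef := by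
  have h1 := h (c₀ / 2) (by linarith) (by linarith)
  have hxh : x.IsHermitian := by
    have h2 : (x - (c₀ / 2) • v).IsHermitian := h1.1
    have hx : x = (x - (c₀ / 2) • v) + (c₀ / 2) • v := by abel
    rw [hx]; exact h2.add (herm_real_smul hv.1 _)
  refine .of_dotProduct_mulVec_nonneg (hxh.sub (herm_real_smul hv.1 c₀)) fun y => ?_
  apply eps_nonneg (ε₀ := c₀) hc₀ (hv.dotProduct_mulVec_nonneg y)
  intro ε hε hε1
  have h3 := (h (c₀ - ε) (by linarith) (by linarith)).dotProduct_mulVec_nonneg y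
  convert h3 using 1
  simp only [sub_mulVec, dotProduct_sub, real_smul_eq, smul_mulVec, dotProduct_smul,
    smul_eq_mul, Complex.ofReal_sub]
  ring

lemma conj_mul_conj {N : Type*} [Fintype N] [DecidableEq N] (U D E : Matrix N N ℂ)
    (hU1 : star U * U = 1) :
    (U * D * star U) * (U * E * star U) = U * (D * E) * star U := by
  have h : star U * (U * (E * star U)) = E * star U := by
    rw [← Matrix.mul_assoc, hU1, Matrix.one_mul]
  simp only [Matrix.mul_assoc, h]

open scoped MatrixOrder in
lemma sqrt_expr_unique {N : Type*} [Fintype N] [DecidableEq N] {M S : Matrix N N ℂ}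
    (hM : M.PosSemidef) (hS : S.PosSemidef) (hsq : S ^ 2 = M) :
    S = (hM.1.eigenvectorUnitary.1 *
      Matrix.diagonal (((↑) : ℝ → ℂ) ∘ (Real.sqrt ∘ hM.1.eigenvalues)) *
      (star hM.1.eigenvectorUnitary : Matrix N N ℂ)) := by
  have hU1 : star (hM.1.eigenvectorUnitary : Matrix N N ℂ) * (hM.1.eigenvectorUnitary : Matrix N N ℂ)
      = 1 := Matrix.mem_unitaryGroup_iff'.mp hM.1.eigenvectorUnitary.2
  have hT : ((hM.1.eigenvectorUnitary : Matrix N N ℂ) *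
      Matrix.diagonal (((↑) : ℝ → ℂ) ∘ (Real.sqrt ∘ hM.1.eigenvalues)) *
      star (hM.1.eigenvectorUnitary : Matrix N N ℂ)).PosSemidef := by
    rw [Matrix.star_eq_conjTranspose]
    refine Matrix.PosSemidef.mul_mul_conjTranspose_same ?_ _
    refine posSemidef_diagonal_iff.mpr fun i => ?_
    exact Complex.zero_le_real.mpr (Real.sqrt_nonneg _)
  have hspec : M = (hM.1.eigenvectorUnitary : Matrix N N ℂ) *
      diagonal (RCLike.ofReal ∘ hM.1.eigenvalues) *
      star (hM.1.eigenvectorUnitary : Matrix N N ℂ) := by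
    conv_lhs => rw [hM.1.spectral_theorem, Unitary.conjStarAlgAut_apply]
  have hT2 : ((hM.1.eigenvectorUnitary : Matrix N N ℂ) *
      Matrix.diagonal (((↑) : ℝ → ℂ) ∘ (Real.sqrt ∘ hM.1.eigenvalues)) *
      star (hM.1.eigenvectorUnitary : Matrix N N ℂ)) ^ 2 = M := by
    rw [pow_two, conj_mul_conj _ _ _ hU1, diagonal_mul_diagonal]
    refine Eq.trans ?_ hspec.symm
    congr 2
    refine congrArg diagonal (funext fun i => ?_)
    simp only [Function.comp_apply]
    rw [← Complex.ofReal_mul, Real.mul_self_sqrt (hM.eigenvalues_nonneg i)]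
    rfl
  exact (CFC.sq_eq_sq_iff S _ hS.nonneg hT.nonneg).mp (hsq.trans hT2.symm)

lemma traceNorm_herm {N : Type*} [Fintype N] [DecidableEq N] {A : Matrix N N ℂ}
    (hA : A.IsHermitian) : traceNorm A = ∑ i, |hA.eigenvalues i| := by
  have hU1 : star (hA.eigenvectorUnitary : Matrix N N ℂ) * (hA.eigenvectorUnitary : Matrix N N ℂ)
      = 1 := Matrix.mem_unitaryGroup_iff'.mp hA.eigenvectorUnitary.2
  set U : Matrix N N ℂ := (hA.eigenvectorUnitary : Matrix N N ℂ) with hUdef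
  set S : Matrix N N ℂ := U * diagonal (fun i => ((|hA.eigenvalues i| : ℝ) : ℂ)) * star U
    with hSdef
  have hSpsd : S.PosSemidef := by
    rw [hSdef, Matrix.star_eq_conjTranspose]
    refine Matrix.PosSemidef.mul_mul_conjTranspose_same ?_ _
    refine posSemidef_diagonal_iff.mpr fun i => ?_
    exact_mod_cast Complex.zero_le_real.mpr (abs_nonneg _)
  have hAspec : A = U * diagonal (fun i => ((hA.eigenvalues i : ℝ) : ℂ)) * star U := by
    conv_lhs => rw [hA.spectral_theorem, Unitary.conjStarAlgAut_apply]
    rfl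
  have habs : (diagonal fun i => ((|hA.eigenvalues i| : ℝ) : ℂ))
      * (diagonal fun i => ((|hA.eigenvalues i| : ℝ) : ℂ))
      = (diagonal fun i => ((hA.eigenvalues i : ℝ) : ℂ))
        * (diagonal fun i => ((hA.eigenvalues i : ℝ) : ℂ)) := by
    rw [diagonal_mul_diagonal, diagonal_mul_diagonal]
    refine congrArg diagonal (funext fun i => ?_)
    have h := abs_mul_abs_self (hA.eigenvalues i)
    rw [← Complex.ofReal_mul, ← Complex.ofReal_mul, h]
  have hsq : S ^ 2 = Aᴴ * A := by
    rw [pow_two, hSdef, conj_mul_conj _ _ _ hU1, habs, ← conj_mul_conj _ _ _ hU1,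
      ← hAspec, hA.eq]
  have hS := sqrt_expr_unique (Matrix.posSemidef_conjTranspose_mul_self A) hSpsd hsq
  rw [traceNorm, ← hS, hSdef]
  rw [Matrix.trace_mul_cycle, hU1, Matrix.one_mul, trace_diagonal]
  rw [Complex.re_sum]
  simp

lemma traceNorm_le_of_sandwich {N : Type*} [Fintype N] [DecidableEq N] {A B : Matrix N N ℂ}
    (hA : A.IsHermitian) (h1 : (B - A).PosSemidef) (h2 : (B + A).PosSemidef) :
    traceNorm A ≤ B.trace.re := by
  rw [traceNorm_herm hA]
  have hU2 : (hA.eigenvectorUnitary : Matrix N N ℂ) * star (hA.eigenvectorUnitary : Matrix N N ℂ)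
      = 1 := Matrix.mem_unitaryGroup_iff.mp hA.eigenvectorUnitary.2
  set U : Matrix N N ℂ := (hA.eigenvectorUnitary : Matrix N N ℂ) with hUdef
  have hdiagA : star U * A * U = diagonal (fun i => ((hA.eigenvalues i : ℝ) : ℂ)) :=
    by have := hA.conjStarAlgAut_star_eigenvectorUnitary
       rwa [Unitary.conjStarAlgAut_apply, Unitary.coe_star, star_star] at this
  set D : Matrix N N ℂ := star U * B * U with hDdef
  have key : ∀ i, |hA.eigenvalues i| ≤ (D i i).re := by
    intro i
    have e1 : star U * (B - A) * U = D - diagonal (fun i => ((hA.eigenvalues i : ℝ) : ℂ)) := by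
      rw [Matrix.mul_sub, Matrix.sub_mul, hdiagA]
    have e2 : star U * (B + A) * U = D + diagonal (fun i => ((hA.eigenvalues i : ℝ) : ℂ)) := by
      rw [Matrix.mul_add, Matrix.add_mul, hdiagA]
    have p1 : (star U * (B - A) * U).PosSemidef := by
      rw [Matrix.star_eq_conjTranspose]
      exact h1.conjTranspose_mul_mul_same U
    have p2 : (star U * (B + A) * U).PosSemidef := by
      rw [Matrix.star_eq_conjTranspose]
      exact h2.conjTranspose_mul_mul_same U
    have d1 : 0 ≤ (star U * (B - A) * U) i i := by
      exact p1.diag_nonneg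
    have d2 : 0 ≤ (star U * (B + A) * U) i i := by
      exact p2.diag_nonneg
    rw [e1] at d1
    rw [e2] at d2
    have r1 := (Complex.le_def.mp d1).1
    have r2 := (Complex.le_def.mp d2).1
    simp only [Complex.zero_re, Matrix.sub_apply, Matrix.add_apply, Complex.sub_re,
      Complex.add_re, diagonal_apply_eq, Function.comp_apply] at r1 r2
    rw [Complex.ofReal_re] at r1 r2
    rw [abs_le]
    exact ⟨by linarith, by linarith⟩
  calc ∑ i, |hA.eigenvalues i| ≤ ∑ i, (D i i).re := Finset.sum_le_sum fun i _ => key i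
    _ = D.trace.re := by rw [Matrix.trace]; rw [Complex.re_sum]; rfl
    _ = B.trace.re := by
        rw [hDdef, Matrix.trace_mul_cycle, hU2, Matrix.one_mul]

end Helpers

/-- If `x`, `v` are positive definite with `Tr x = Tr v = 1` and
`d_H(x,v) ≤ η`, then `e^{-η} v ≤ x ≤ e^{η} v` in the Loewner order, and consequently
`‖x - v‖₁ ≤ e^{η} - 1`. -/
theorem stmt15 (n : ℕ) (x v : Matrix (Fin n) (Fin n) ℂ)
    (hx : x.PosDef) (hv : v.PosDef) (htx : x.trace = 1) (htv : v.trace = 1)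
    (η : ℝ) (hη : 0 ≤ η) (hd : dH x v ≤ (η : EReal)) :
    (x - Real.exp (-η) • v).PosSemidef ∧
    (Real.exp η • v - x).PosSemidef ∧
    traceNorm (x - v) ≤ Real.exp η - 1 := by
  -- the index type is nonempty
  rcases Nat.eq_zero_or_pos n with hn0 | hn
  · subst hn0
    exfalso
    simp [Matrix.trace] at htx
  haveI : Nonempty (Fin n) := ⟨⟨0, hn⟩⟩
  have hne : (Finset.univ : Finset (Fin n)).Nonempty := Finset.univ_nonempty
  -- eigenvalue bounds
  set Mx : ℝ := Finset.univ.sup' hne hx.1.eigenvalues with hMx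
  set dx : ℝ := Finset.univ.inf' hne hx.1.eigenvalues with hdx
  set Mv : ℝ := Finset.univ.sup' hne hv.1.eigenvalues with hMv
  set dv : ℝ := Finset.univ.inf' hne hv.1.eigenvalues with hdv
  have hdx_pos : 0 < dx := (Finset.lt_inf'_iff hne).mpr fun i _ => hx.eigenvalues_pos i
  have hdv_pos : 0 < dv := (Finset.lt_inf'_iff hne).mpr fun i _ => hv.eigenvalues_pos i
  have hMx_pos : 0 < Mx := (Finset.lt_sup'_iff hne).mpr ⟨Classical.arbitrary _, Finset.mem_univ _,
    hx.eigenvalues_pos _⟩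
  have hMv_pos : 0 < Mv := (Finset.lt_sup'_iff hne).mpr ⟨Classical.arbitrary _, Finset.mem_univ _,
    hv.eigenvalues_pos _⟩
  have hMx_ge : ∀ i, hx.1.eigenvalues i ≤ Mx := fun i => Finset.le_sup' _ (Finset.mem_univ i)
  have hMv_ge : ∀ i, hv.1.eigenvalues i ≤ Mv := fun i => Finset.le_sup' _ (Finset.mem_univ i)
  have hdx_le : ∀ i, dx ≤ hx.1.eigenvalues i := fun i => Finset.inf'_le _ (Finset.mem_univ i)
  have hdv_le : ∀ i, dv ≤ hv.1.eigenvalues i := fun i => Finset.inf'_le _ (Finset.mem_univ i)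
  -- witnesses for supRatio / infRatio
  set c₁ : ℝ := Mx / dv with hc₁def
  set c₀ : ℝ := dx / Mv with hc₀def
  have hc1_pos : 0 < c₁ := div_pos hMx_pos hdv_pos
  have hc0_pos : 0 < c₀ := div_pos hdx_pos hMv_pos
  have hc1d : c₁ * dv = Mx := div_mul_cancel₀ _ (ne_of_gt hdv_pos)
  have hc0M : c₀ * Mv = dx := div_mul_cancel₀ _ (ne_of_gt hMv_pos)
  have hpsd1 : (c₁ • v - x).PosSemidef := by
    have A1 : ((-dv) • (1 : Matrix (Fin n) (Fin n) ℂ) + (1 : ℝ) • v).PosSemidef :=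
      psd_affine hv.1 (-dv) 1 (fun i => by have := hdv_le i; simp only [one_mul]; linarith)
    have A2 : ((c₁ * dv) • (1 : Matrix (Fin n) (Fin n) ℂ) + (-1 : ℝ) • x).PosSemidef :=
      psd_affine hx.1 (c₁ * dv) (-1) (fun i => by
        have := hMx_ge i; rw [hc1d]; nlinarith)
    have hid : c₁ • v - x
        = c₁ • ((-dv) • (1 : Matrix (Fin n) (Fin n) ℂ) + (1 : ℝ) • v)
          + ((c₁ * dv) • (1 : Matrix (Fin n) (Fin n) ℂ) + (-1 : ℝ) • x) := by
      module
    rw [hid]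
    exact (psd_real_smul A1 hc1_pos.le).add A2
  have hpsd0 : (x - c₀ • v).PosSemidef := by
    have A3 : ((-(c₀ * Mv)) • (1 : Matrix (Fin n) (Fin n) ℂ) + (1 : ℝ) • x).PosSemidef :=
      psd_affine hx.1 (-(c₀ * Mv)) 1 (fun i => by
        have := hdx_le i; rw [hc0M]; simp only [one_mul]; linarith)
    have A4 : (Mv • (1 : Matrix (Fin n) (Fin n) ℂ) + (-1 : ℝ) • v).PosSemidef :=
      psd_affine hv.1 Mv (-1) (fun i => by have := hMv_ge i; nlinarith)
    have hid : x - c₀ • v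
        = ((-(c₀ * Mv)) • (1 : Matrix (Fin n) (Fin n) ℂ) + (1 : ℝ) • x)
          + c₀ • (Mv • (1 : Matrix (Fin n) (Fin n) ℂ) + (-1 : ℝ) • v) := by
      module
    rw [hid]
    exact A3.add (psd_real_smul A4 hc0_pos.le)
  -- trace constraints
  have trace_up : ∀ c : ℝ, (c • v - x).PosSemidef → 1 ≤ c := by
    intro c hc
    have h0 := psd_trace_nonneg hc
    rw [Matrix.trace_sub, Matrix.trace_smul, htx, htv] at h0
    have h' : 0 ≤ ((c : ℂ) - 1) := by
      convert h0 using 1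
      simp [Complex.real_smul]
    have := (Complex.le_def.mp h').1
    simp only [Complex.zero_re, Complex.sub_re, Complex.ofReal_re, Complex.one_re] at this
    linarith
  have trace_dn : ∀ c : ℝ, (x - c • v).PosSemidef → c ≤ 1 := by
    intro c hc
    have h0 := psd_trace_nonneg hc
    rw [Matrix.trace_sub, Matrix.trace_smul, htx, htv] at h0
    have h' : 0 ≤ ((1 : ℂ) - c) := by
      convert h0 using 1
      simp [Complex.real_smul]
    have := (Complex.le_def.mp h').1
    simp only [Complex.zero_re, Complex.sub_re, Complex.ofReal_re, Complex.one_re] at this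
    linarith
  -- ENNReal bookkeeping
  set s : ENNReal := supRatio x v with hs
  set t : ENNReal := infRatio x v with ht
  have hs_le : s ≤ ENNReal.ofReal c₁ := sInf_le ⟨c₁, hc1_pos.le, rfl, hpsd1⟩
  have ht_ge : ENNReal.ofReal c₀ ≤ t := le_sSup ⟨c₀, hc0_pos.le, rfl, hpsd0⟩
  have hs_ge : 1 ≤ s := by
    refine le_sInf fun r hr => ?_
    obtain ⟨c, hc0, rfl, hcps⟩ := hr
    have h1c := trace_up c hcps
    calc (1 : ENNReal) = ENNReal.ofReal 1 := by simp
      _ ≤ ENNReal.ofReal c := ENNReal.ofReal_le_ofReal h1c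
  have ht_le : t ≤ 1 := by
    refine sSup_le fun r hr => ?_
    obtain ⟨c, hc0, rfl, hcps⟩ := hr
    have h1c := trace_dn c hcps
    calc ENNReal.ofReal c ≤ ENNReal.ofReal 1 := ENNReal.ofReal_le_ofReal h1c
      _ = 1 := by simp
  have ht0 : t ≠ 0 := (lt_of_lt_of_le (ENNReal.ofReal_pos.mpr hc0_pos) ht_ge).ne'
  have htT : t ≠ ⊤ := (lt_of_le_of_lt ht_le ENNReal.one_lt_top).ne
  -- from the Hilbert-metric bound
  have hE : ENNReal.log (ENNReal.ofReal (Real.exp η)) = (η : EReal) := by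
    rw [ENNReal.log_ofReal_of_pos (Real.exp_pos η), Real.log_exp]
  have hdlog : ENNReal.log (s / t) ≤ ENNReal.log (ENNReal.ofReal (Real.exp η)) := by
    rw [hE]; exact hd
  have hdiv : s / t ≤ ENNReal.ofReal (Real.exp η) := ENNReal.log_strictMono.le_iff_le.mp hdlog
  have hst : s ≤ ENNReal.ofReal (Real.exp η) * t := by
    have h1 : s / t * t = s := ENNReal.div_mul_cancel ht0 htT
    calc s = s / t * t := h1.symm
      _ ≤ ENNReal.ofReal (Real.exp η) * t := mul_le_mul_left hdiv t
  have hsE : s ≤ ENNReal.ofReal (Real.exp η) := by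
    calc s ≤ ENNReal.ofReal (Real.exp η) * t := hst
      _ ≤ ENNReal.ofReal (Real.exp η) * 1 := mul_le_mul_right ht_le _
      _ = ENNReal.ofReal (Real.exp η) := mul_one _
  have htE : ENNReal.ofReal (Real.exp (-η)) ≤ t := by
    have hE0 : (ENNReal.ofReal (Real.exp η)) ≠ 0 := (ENNReal.ofReal_pos.mpr (Real.exp_pos η)).ne'
    have hinv : ENNReal.ofReal (Real.exp (-η)) = (ENNReal.ofReal (Real.exp η))⁻¹ := by
      rw [Real.exp_neg, ENNReal.ofReal_inv_of_pos (Real.exp_pos η)]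
    have h1 : (1 : ENNReal) ≤ ENNReal.ofReal (Real.exp η) * t := le_trans hs_ge hst
    calc ENNReal.ofReal (Real.exp (-η)) = (ENNReal.ofReal (Real.exp η))⁻¹ * 1 := by
          rw [hinv, mul_one]
      _ ≤ (ENNReal.ofReal (Real.exp η))⁻¹ * (ENNReal.ofReal (Real.exp η) * t) :=
          mul_le_mul_right h1 _
      _ = t := by rw [← mul_assoc, ENNReal.inv_mul_cancel hE0 ENNReal.ofReal_ne_top, one_mul]
  -- conclusion, upper Loewner bound
  have goalB : (Real.exp η • v - x).PosSemidef := by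
    apply psd_of_forall_gt hv.posSemidef
    intro c hc
    have hcpos : 0 < c := lt_trans (Real.exp_pos η) hc
    have hlt : s < ENNReal.ofReal c :=
      lt_of_le_of_lt hsE ((ENNReal.ofReal_lt_ofReal_iff hcpos).mpr hc)
    obtain ⟨r, hrmem, hrlt⟩ := sInf_lt_iff.mp hlt
    obtain ⟨c', hc'0, rfl, hps⟩ := hrmem
    have hcc' : c' < c := by
      by_contra hcon
      push_neg at hcon
      exact absurd (ENNReal.ofReal_le_ofReal hcon) (not_le.mpr hrlt)
    have hid : c • v - x = (c' • v - x) + (c - c') • v := by module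
    rw [hid]
    exact hps.add (psd_real_smul hv.posSemidef (by linarith))
  -- conclusion, lower Loewner bound
  have goalA : (x - Real.exp (-η) • v).PosSemidef := by
    apply psd_of_forall_lt hv.posSemidef _ (Real.exp_pos _)
    intro c hc0 hclt
    have hlt : ENNReal.ofReal c < t :=
      lt_of_lt_of_le ((ENNReal.ofReal_lt_ofReal_iff (Real.exp_pos _)).mpr hclt) htE
    obtain ⟨r, hrmem, hrlt⟩ := lt_sSup_iff.mp hlt
    obtain ⟨c', hc'0, rfl, hps⟩ := hrmem
    have hcc' : c < c' := by
      by_contra hcon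
      push_neg at hcon
      exact absurd (ENNReal.ofReal_le_ofReal hcon) (not_le.mpr hrlt)
    have hid : x - c • v = (x - c' • v) + (c' - c) • v := by module
    rw [hid]
    exact hps.add (psd_real_smul hv.posSemidef (by linarith))
  refine ⟨goalA, goalB, ?_⟩
  -- trace norm bound
  have hexp2 : (2 : ℝ) ≤ Real.exp η + Real.exp (-η) := by
    have h1 := Real.add_one_le_exp η
    have h2 := Real.add_one_le_exp (-η)
    linarith
  have hBA1 : ((Real.exp η - 1) • v - (x - v)).PosSemidef := by
    have hid : (Real.exp η - 1) • v - (x - v) = Real.exp η • v - x := by module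
    rw [hid]; exact goalB
  have hBA2 : ((Real.exp η - 1) • v + (x - v)).PosSemidef := by
    have hid : (Real.exp η - 1) • v + (x - v)
        = (x - Real.exp (-η) • v) + (Real.exp η + Real.exp (-η) - 2) • v := by module
    rw [hid]
    exact goalA.add (psd_real_smul hv.posSemidef (by linarith))
  have hmain := traceNorm_le_of_sandwich (hx.1.sub hv.1) hBA1 hBA2
  have htr : (((Real.exp η - 1) • v).trace).re = Real.exp η - 1 := by
    rw [Matrix.trace_smul, htv, Complex.real_smul, mul_one]
    exact Complex.ofReal_re _
  rw [htr] at hmain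
  exact hmain
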